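/- Let X and Y be real random variables with finite positive variance. Then (X,Y) ∈ IC_0 if and only if (X,Y) is quasi-independent. -/

import Mathlib

open MeasureTheory ProbabilityTheory

variable {Ω : Type*} [MeasurableSpace Ω]

noncomputable def cov (μ : Measure Ω) (X Y : Ω → ℝ) : ℝ :=
  ∫ ω, (X ω - ∫ a, X a ∂μ) * (Y ω - ∫ a, Y a ∂μ) ∂μ

noncomputable def corr (μ : Measure Ω) (X Y : Ω → ℝ) : ℝ :=
  cov μ X Y / Real.sqrt (variance X μ * variance Y μ)

def Admissible (μ : Measure Ω) (X Y : Ω → ℝ) (g : ℝ → ℝ) : Prop :=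
  Measurable g ∧ MemLp (g ∘ X) 2 μ ∧ MemLp (g ∘ Y) 2 μ ∧
    0 < variance (g ∘ X) μ ∧ 0 < variance (g ∘ Y) μ

def IC (μ : Measure Ω) (X Y : Ω → ℝ) (r : ℝ) : Prop :=
  corr μ X Y = r ∧ ∀ g : ℝ → ℝ, Admissible μ X Y g → corr μ (g ∘ X) (g ∘ Y) = r

/-- `(X,Y)` with joint CDF `H` and marginal CDFs `F`, `G` is quasi-independent if
`H(x,y) + H(y,x) = F(x)G(y) + F(y)G(x)` for all `x, y`. -/
def QuasiIndep (μ : Measure Ω) (X Y : Ω → ℝ) : Prop :=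
  ∀ x y : ℝ,
    (μ {ω | X ω ≤ x ∧ Y ω ≤ y}).toReal + (μ {ω | X ω ≤ y ∧ Y ω ≤ x}).toReal =
      (μ {ω | X ω ≤ x}).toReal * (μ {ω | Y ω ≤ y}).toReal +
        (μ {ω | X ω ≤ y}).toReal * (μ {ω | Y ω ≤ x}).toReal

/-! ### Auxiliary lemmas -/

lemma aux_integrable_mul_of_two {μ : Measure Ω} {S T : Ω → ℝ}
    (hS : MemLp S 2 μ) (hT : MemLp T 2 μ) :
    Integrable (fun ω => S ω * T ω) μ := by
  have h := hT.smul (φ := S) hS (r := 1)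
  rw [memLp_one_iff_integrable] at h
  simpa [smul_eq_mul, Pi.mul_def] using h

lemma aux_cov_eq_sub (μ : Measure Ω) [IsProbabilityMeasure μ] {S T : Ω → ℝ}
    (hS : MemLp S 2 μ) (hT : MemLp T 2 μ) :
    cov μ S T = (∫ ω, S ω * T ω ∂μ) - (∫ ω, S ω ∂μ) * (∫ ω, T ω ∂μ) := by
  have hST := aux_integrable_mul_of_two hS hT
  have hSi := hS.integrable one_le_two
  have hTi := hT.integrable one_le_two
  set a := ∫ ω, S ω ∂μ
  set b := ∫ ω, T ω ∂μ
  have h1 : (fun ω => (S ω - a) * (T ω - b))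
      = fun ω => S ω * T ω - (a * T ω + b * S ω - a * b) := funext fun ω => by ring
  have h2 : Integrable (fun ω => a * T ω + b * S ω) μ := (hTi.const_mul a).add (hSi.const_mul b)
  have h3 : Integrable (fun ω => a * T ω + b * S ω - a * b) μ := h2.sub (integrable_const _)
  have h4 : Integrable (fun ω => a * T ω) μ := hTi.const_mul a
  have h5 : Integrable (fun ω => b * S ω) μ := hSi.const_mul b
  rw [cov, h1, integral_sub hST h3, integral_sub h2 (integrable_const _),
    integral_add h4 h5, integral_const_mul, integral_const_mul, integral_const]
  simp only [measureReal_def, measure_univ, ENNReal.toReal_one, smul_eq_mul, one_mul]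
  ring

/-- The `{0,1}`-valued indicator of a set, as a real-valued function. -/
noncomputable def indOne {α : Type*} (A : Set α) : α → ℝ := A.indicator (fun _ => 1)

lemma indOne_mul {α : Type*} (A B : Set α) (ω : α) :
    indOne A ω * indOne B ω = indOne (A ∩ B) ω := by
  by_cases hA : ω ∈ A <;> by_cases hB : ω ∈ B <;> simp [indOne, Set.indicator, hA, hB]

lemma aux_memℒp_indOne (μ : Measure Ω) [IsFiniteMeasure μ] {A : Set Ω} (hA : MeasurableSet A) :
    MemLp (indOne A) 2 μ :=
  memLp_indicator_const 2 hA 1 (Or.inr (measure_ne_top _ _))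

lemma aux_integral_indOne (μ : Measure Ω) [IsFiniteMeasure μ] {A : Set Ω}
    (hA : MeasurableSet A) : ∫ ω, indOne A ω ∂μ = (μ A).toReal := by
  rw [indOne, integral_indicator_const (1 : ℝ) hA]; simp; rfl

lemma aux_integrable_indOne (μ : Measure Ω) [IsFiniteMeasure μ] {A : Set Ω}
    (hA : MeasurableSet A) : Integrable (indOne A) μ :=
  (aux_memℒp_indOne μ hA).integrable one_le_two

lemma aux_integral_indOne_add_mul (μ : Measure Ω) [IsFiniteMeasure μ] {A B A' B' : Set Ω}
    (hA : MeasurableSet A) (hB : MeasurableSet B) (hA' : MeasurableSet A')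
    (hB' : MeasurableSet B') :
    ∫ ω, (indOne A ω + indOne B ω) * (indOne A' ω + indOne B' ω) ∂μ =
      (μ (A ∩ A')).toReal + (μ (A ∩ B')).toReal + (μ (B ∩ A')).toReal + (μ (B ∩ B')).toReal := by
  have h1 : (fun ω => (indOne A ω + indOne B ω) * (indOne A' ω + indOne B' ω))
      = fun ω => (indOne (A ∩ A') ω + indOne (A ∩ B') ω) +
          (indOne (B ∩ A') ω + indOne (B ∩ B') ω) := by
    funext ω
    rw [← indOne_mul, ← indOne_mul, ← indOne_mul, ← indOne_mul]
    ring
  have i1 : Integrable (fun ω => indOne (A ∩ A') ω + indOne (A ∩ B') ω) μ :=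
    (aux_integrable_indOne μ (hA.inter hA')).add (aux_integrable_indOne μ (hA.inter hB'))
  have i2 : Integrable (fun ω => indOne (B ∩ A') ω + indOne (B ∩ B') ω) μ :=
    (aux_integrable_indOne μ (hB.inter hA')).add (aux_integrable_indOne μ (hB.inter hB'))
  rw [h1, integral_add i1 i2,
    integral_add (aux_integrable_indOne μ (hA.inter hA')) (aux_integrable_indOne μ (hA.inter hB')),
    integral_add (aux_integrable_indOne μ (hB.inter hA')) (aux_integrable_indOne μ (hB.inter hB')),
    aux_integral_indOne μ (hA.inter hA'), aux_integral_indOne μ (hA.inter hB'),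
    aux_integral_indOne μ (hB.inter hA'), aux_integral_indOne μ (hB.inter hB')]
  ring

lemma aux_cov_indOne_add (μ : Measure Ω) [IsProbabilityMeasure μ] {A B A' B' : Set Ω}
    (hA : MeasurableSet A) (hB : MeasurableSet B) (hA' : MeasurableSet A')
    (hB' : MeasurableSet B') :
    cov μ (fun ω => indOne A ω + indOne B ω) (fun ω => indOne A' ω + indOne B' ω) =
      ((μ (A ∩ A')).toReal + (μ (A ∩ B')).toReal + (μ (B ∩ A')).toReal + (μ (B ∩ B')).toReal)
        - ((μ A).toReal + (μ B).toReal) * ((μ A').toReal + (μ B').toReal) := by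
  have m1 : MemLp (fun ω => indOne A ω + indOne B ω) 2 μ :=
    (aux_memℒp_indOne μ hA).add (aux_memℒp_indOne μ hB)
  have m2 : MemLp (fun ω => indOne A' ω + indOne B' ω) 2 μ :=
    (aux_memℒp_indOne μ hA').add (aux_memℒp_indOne μ hB')
  rw [aux_cov_eq_sub μ m1 m2, aux_integral_indOne_add_mul μ hA hB hA' hB',
    integral_add (aux_integrable_indOne μ hA) (aux_integrable_indOne μ hB),
    integral_add (aux_integrable_indOne μ hA') (aux_integrable_indOne μ hB'),
    aux_integral_indOne μ hA, aux_integral_indOne μ hB,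
    aux_integral_indOne μ hA', aux_integral_indOne μ hB']

lemma aux_variance_indOne_add (μ : Measure Ω) [IsProbabilityMeasure μ] {A B : Set Ω}
    (hA : MeasurableSet A) (hB : MeasurableSet B) :
    variance (fun ω => indOne A ω + indOne B ω) μ =
      ((μ A).toReal + (μ (A ∩ B)).toReal + (μ (A ∩ B)).toReal + (μ B).toReal)
        - ((μ A).toReal + (μ B).toReal) * ((μ A).toReal + (μ B).toReal) := by
  have m1 : MemLp (fun ω => indOne A ω + indOne B ω) 2 μ :=
    (aux_memℒp_indOne μ hA).add (aux_memℒp_indOne μ hB)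
  rw [variance_eq_sub m1]
  have h2 : ((fun ω => indOne A ω + indOne B ω) ^ 2)
      = fun ω => (indOne A ω + indOne B ω) * (indOne A ω + indOne B ω) := by
    funext ω; simp [pow_two]
  rw [h2, aux_integral_indOne_add_mul μ hA hB hA hB,
    integral_add (aux_integrable_indOne μ hA) (aux_integrable_indOne μ hB),
    aux_integral_indOne μ hA, aux_integral_indOne μ hB, Set.inter_self, Set.inter_self,
    Set.inter_comm B A]
  ring

lemma aux_inter_triv_left (μ : Measure Ω) [IsProbabilityMeasure μ] {A B : Set Ω}
    (hA : MeasurableSet A) (h : (μ A).toReal = 0 ∨ (μ A).toReal = 1) :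
    (μ (A ∩ B)).toReal = (μ A).toReal * (μ B).toReal := by
  rcases h with h | h
  · have hA0 : μ A = 0 := by
      rcases (ENNReal.toReal_eq_zero_iff _).mp h with h' | h'
      · exact h'
      · exact absurd h' (measure_ne_top _ _)
    rw [measure_mono_null Set.inter_subset_left hA0, h]
    simp
  · have hA1 : μ A = 1 := (ENNReal.toReal_eq_one_iff _).mp h
    have hAc : μ Aᶜ = 0 := by
      rw [measure_compl hA (measure_ne_top _ _), hA1, measure_univ, tsub_self]
    rw [Set.inter_comm, measure_inter_conull hAc, h, one_mul]

lemma aux_inter_triv_right (μ : Measure Ω) [IsProbabilityMeasure μ] {A B : Set Ω}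
    (hB : MeasurableSet B) (h : (μ B).toReal = 0 ∨ (μ B).toReal = 1) :
    (μ (A ∩ B)).toReal = (μ A).toReal * (μ B).toReal := by
  rw [Set.inter_comm, aux_inter_triv_left μ hB h, mul_comm]

lemma aux_quasiIndep_map_eq (μ : Measure Ω) [IsProbabilityMeasure μ] {X Y : Ω → ℝ}
    (hXm : Measurable X) (hYm : Measurable Y) (hQI : QuasiIndep μ X Y) :
    μ.map (fun ω => (X ω, Y ω)) + μ.map (fun ω => (Y ω, X ω))
      = (μ.map X).prod (μ.map Y) + (μ.map Y).prod (μ.map X) := by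
  classical
  have hXY : Measurable fun ω => (X ω, Y ω) := hXm.prodMk hYm
  have hYX : Measurable fun ω => (Y ω, X ω) := hYm.prodMk hXm
  haveI : IsProbabilityMeasure (μ.map X) := Measure.isProbabilityMeasure_map hXm.aemeasurable
  haveI : IsProbabilityMeasure (μ.map Y) := Measure.isProbabilityMeasure_map hYm.aemeasurable
  haveI : IsProbabilityMeasure (μ.map (fun ω => (X ω, Y ω))) :=
    Measure.isProbabilityMeasure_map hXY.aemeasurable
  haveI : IsProbabilityMeasure (μ.map (fun ω => (Y ω, X ω))) :=
    Measure.isProbabilityMeasure_map hYX.aemeasurable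
  have hspan : IsCountablySpanning (Set.range (Set.Iic : ℝ → Set ℝ)) := by
    refine ⟨fun n => Set.Iic n, fun n => ⟨n, rfl⟩, ?_⟩
    ext u
    simp only [Set.mem_iUnion, Set.mem_Iic, Set.mem_univ, iff_true]
    exact exists_nat_ge u
  have hgen : (inferInstance : MeasurableSpace (ℝ × ℝ)) =
      MeasurableSpace.generateFrom
        (Set.image2 (· ×ˢ ·) (Set.range Set.Iic) (Set.range Set.Iic)) := by
    rw [← generateFrom_prod_eq hspan hspan]
    have h1 : (inferInstance : MeasurableSpace ℝ)
        = MeasurableSpace.generateFrom (Set.range Set.Iic) := by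
      rw [BorelSpace.measurable_eq (α := ℝ), borel_eq_generateFrom_Iic]
    rw [← h1]
  refine ext_of_generate_finite _ hgen (isPiSystem_Iic.prod isPiSystem_Iic) ?_ ?_
  · rintro s ⟨_, ⟨a, rfl⟩, _, ⟨b, rfl⟩, rfl⟩
    have hrect : MeasurableSet (Set.Iic a ×ˢ Set.Iic b) :=
      measurableSet_Iic.prod measurableSet_Iic
    rw [Measure.add_apply, Measure.add_apply,
      Measure.map_apply hXY hrect, Measure.map_apply hYX hrect,
      Measure.prod_prod, Measure.prod_prod,
      Measure.map_apply hXm measurableSet_Iic, Measure.map_apply hYm measurableSet_Iic,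
      Measure.map_apply hXm measurableSet_Iic, Measure.map_apply hYm measurableSet_Iic]
    have h1 : (fun ω => (X ω, Y ω)) ⁻¹' (Set.Iic a ×ˢ Set.Iic b) = {ω | X ω ≤ a ∧ Y ω ≤ b} := by
      ext ω; simp [Set.mem_prod]
    have h2 : (fun ω => (Y ω, X ω)) ⁻¹' (Set.Iic a ×ˢ Set.Iic b) = {ω | X ω ≤ b ∧ Y ω ≤ a} := by
      ext ω; simp [Set.mem_prod, and_comm]
    rw [h1, h2]
    have key := hQI a b
    have fin : ∀ s : Set Ω, μ s ≠ ⊤ := fun s => measure_ne_top μ s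
    have hXa : X ⁻¹' Set.Iic a = {ω | X ω ≤ a} := rfl
    have hXb : X ⁻¹' Set.Iic b = {ω | X ω ≤ b} := rfl
    have hYa : Y ⁻¹' Set.Iic a = {ω | Y ω ≤ a} := rfl
    have hYb : Y ⁻¹' Set.Iic b = {ω | Y ω ≤ b} := rfl
    rw [hXa, hXb, hYa, hYb]
    refine (ENNReal.toReal_eq_toReal_iff' ?_ ?_).mp ?_
    · exact ENNReal.add_ne_top.mpr ⟨fin _, fin _⟩
    · exact ENNReal.add_ne_top.mpr ⟨ENNReal.mul_ne_top (fin _) (fin _),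
        ENNReal.mul_ne_top (fin _) (fin _)⟩
    · rw [ENNReal.toReal_add (fin _) (fin _),
        ENNReal.toReal_add (ENNReal.mul_ne_top (fin _) (fin _))
          (ENNReal.mul_ne_top (fin _) (fin _)),
        ENNReal.toReal_mul, ENNReal.toReal_mul]
      linarith [key]
  · simp [measure_univ]

lemma aux_mul_integral_eq (μ : Measure Ω) [IsProbabilityMeasure μ] {X Y : Ω → ℝ}
    (hXm : Measurable X) (hYm : Measurable Y)
    (hmeq : μ.map (fun ω => (X ω, Y ω)) + μ.map (fun ω => (Y ω, X ω))
      = (μ.map X).prod (μ.map Y) + (μ.map Y).prod (μ.map X))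
    (g : ℝ → ℝ) (hg : Measurable g)
    (h1 : MemLp (g ∘ X) 2 μ) (h2 : MemLp (g ∘ Y) 2 μ) :
    ∫ ω, g (X ω) * g (Y ω) ∂μ = (∫ ω, g (X ω) ∂μ) * (∫ ω, g (Y ω) ∂μ) := by
  have hXY : Measurable fun ω => (X ω, Y ω) := hXm.prodMk hYm
  have hYX : Measurable fun ω => (Y ω, X ω) := hYm.prodMk hXm
  haveI : IsProbabilityMeasure (μ.map X) := Measure.isProbabilityMeasure_map hXm.aemeasurable
  haveI : IsProbabilityMeasure (μ.map Y) := Measure.isProbabilityMeasure_map hYm.aemeasurable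
  set p : ℝ × ℝ → ℝ := fun z => g z.1 * g z.2 with hp_def
  have hp : Measurable p := (hg.comp measurable_fst).mul (hg.comp measurable_snd)
  have hmul : Integrable (fun ω => g (X ω) * g (Y ω)) μ := by
    have h := h2.smul (φ := g ∘ X) h1 (r := 1)
    rw [memLp_one_iff_integrable] at h
    simpa [smul_eq_mul, Function.comp, Pi.mul_def] using h
  have hmul' : Integrable (fun ω => g (Y ω) * g (X ω)) μ := by
    simpa [mul_comm] using hmul
  have iρ : Integrable p (μ.map fun ω => (X ω, Y ω)) :=
    (integrable_map_measure hp.aestronglyMeasurable hXY.aemeasurable).mpr hmul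
  have iρ' : Integrable p (μ.map fun ω => (Y ω, X ω)) :=
    (integrable_map_measure hp.aestronglyMeasurable hYX.aemeasurable).mpr hmul'
  have hgX : Integrable g (μ.map X) :=
    ((memLp_map_measure_iff hg.aestronglyMeasurable hXm.aemeasurable).mpr h1).integrable
      one_le_two
  have hgY : Integrable g (μ.map Y) :=
    ((memLp_map_measure_iff hg.aestronglyMeasurable hYm.aemeasurable).mpr h2).integrable
      one_le_two
  have iπ : Integrable p ((μ.map X).prod (μ.map Y)) := hgX.mul_prod hgY
  have iπ' : Integrable p ((μ.map Y).prod (μ.map X)) := hgY.mul_prod hgX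
  have E1 : ∫ z, p z ∂(μ.map (fun ω => (X ω, Y ω)) + μ.map (fun ω => (Y ω, X ω)))
      = ∫ z, p z ∂(μ.map fun ω => (X ω, Y ω)) + ∫ z, p z ∂(μ.map fun ω => (Y ω, X ω)) :=
    integral_add_measure iρ iρ'
  have E2 : ∫ z, p z ∂((μ.map X).prod (μ.map Y) + (μ.map Y).prod (μ.map X))
      = ∫ z, p z ∂((μ.map X).prod (μ.map Y)) + ∫ z, p z ∂((μ.map Y).prod (μ.map X)) :=
    integral_add_measure iπ iπ'
  rw [hmeq, E2] at E1
  have I1 : ∫ z, p z ∂(μ.map fun ω => (X ω, Y ω)) = ∫ ω, g (X ω) * g (Y ω) ∂μ :=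
    integral_map hXY.aemeasurable hp.aestronglyMeasurable
  have I2 : ∫ z, p z ∂(μ.map fun ω => (Y ω, X ω)) = ∫ ω, g (X ω) * g (Y ω) ∂μ := by
    rw [integral_map hYX.aemeasurable hp.aestronglyMeasurable]
    simp only [hp_def]
    exact integral_congr_ae (Filter.Eventually.of_forall fun ω => mul_comm _ _)
  have I3 : ∫ z, p z ∂((μ.map X).prod (μ.map Y)) = (∫ ω, g (X ω) ∂μ) * ∫ ω, g (Y ω) ∂μ := by
    rw [hp_def, integral_prod_mul g g, integral_map hXm.aemeasurable hg.aestronglyMeasurable,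
      integral_map hYm.aemeasurable hg.aestronglyMeasurable]
  have I4 : ∫ z, p z ∂((μ.map Y).prod (μ.map X)) = (∫ ω, g (X ω) ∂μ) * ∫ ω, g (Y ω) ∂μ := by
    rw [hp_def, integral_prod_mul g g, integral_map hXm.aemeasurable hg.aestronglyMeasurable,
      integral_map hYm.aemeasurable hg.aestronglyMeasurable]
    ring
  rw [I1, I2, I3, I4] at E1
  linarith

/-- `(X,Y) ∈ IC_0` iff `(X,Y)` is quasi-independent. -/
theorem ic_zero_iff_quasiIndep
    (μ : Measure Ω) [IsProbabilityMeasure μ] (X Y : Ω → ℝ)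
    (hXm : Measurable X) (hYm : Measurable Y)
    (hX2 : MemLp X 2 μ) (hY2 : MemLp Y 2 μ)
    (hvX : 0 < variance X μ) (hvY : 0 < variance Y μ) :
    IC μ X Y 0 ↔ QuasiIndep μ X Y := by
  have hA : ∀ s : ℝ, MeasurableSet {ω | X ω ≤ s} := fun s => hXm measurableSet_Iic
  have hB : ∀ s : ℝ, MeasurableSet {ω | Y ω ≤ s} := fun s => hYm measurableSet_Iic
  have hsetXY : ∀ s t : ℝ, {ω | X ω ≤ s ∧ Y ω ≤ t} = {ω | X ω ≤ s} ∩ {ω | Y ω ≤ t} :=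
    fun s t => rfl
  constructor
  · -- forward direction
    rintro ⟨-, hg⟩ x y
    -- the test functions
    set gf : ℝ → ℝ → ℝ → ℝ := fun s t u => indOne (Set.Iic s) u + indOne (Set.Iic t) u
      with hgf_def
    have hgf_meas : ∀ s t : ℝ, Measurable (gf s t) := fun s t =>
      ((measurable_const.indicator measurableSet_Iic).add
        (measurable_const.indicator measurableSet_Iic))
    have hcompX : ∀ s t : ℝ, (gf s t) ∘ X
        = fun ω => indOne {ω | X ω ≤ s} ω + indOne {ω | X ω ≤ t} ω := by
      intro s t
      funext ω
      simp [hgf_def, indOne, Set.indicator_apply, Set.mem_Iic, Set.mem_setOf_eq,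
        Function.comp]
    have hcompY : ∀ s t : ℝ, (gf s t) ∘ Y
        = fun ω => indOne {ω | Y ω ≤ s} ω + indOne {ω | Y ω ≤ t} ω := by
      intro s t
      funext ω
      simp [hgf_def, indOne, Set.indicator_apply, Set.mem_Iic, Set.mem_setOf_eq,
        Function.comp]
    -- covariance vanishes whenever both variances are nonzero
    have hcov0 : ∀ s t : ℝ, variance ((gf s t) ∘ X) μ ≠ 0 → variance ((gf s t) ∘ Y) μ ≠ 0 →
        ((μ ({ω | X ω ≤ s} ∩ {ω | Y ω ≤ s})).toReal
          + (μ ({ω | X ω ≤ s} ∩ {ω | Y ω ≤ t})).toReal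
          + (μ ({ω | X ω ≤ t} ∩ {ω | Y ω ≤ s})).toReal
          + (μ ({ω | X ω ≤ t} ∩ {ω | Y ω ≤ t})).toReal)
        = ((μ {ω | X ω ≤ s}).toReal + (μ {ω | X ω ≤ t}).toReal)
            * ((μ {ω | Y ω ≤ s}).toReal + (μ {ω | Y ω ≤ t}).toReal) := by
      intro s t hvX' hvY'
      have hmX : MemLp ((gf s t) ∘ X) 2 μ := by
        rw [hcompX]
        exact (aux_memℒp_indOne μ (hA s)).add (aux_memℒp_indOne μ (hA t))
      have hmY : MemLp ((gf s t) ∘ Y) 2 μ := by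
        rw [hcompY]
        exact (aux_memℒp_indOne μ (hB s)).add (aux_memℒp_indOne μ (hB t))
      have hadm : Admissible μ X Y (gf s t) :=
        ⟨hgf_meas s t, hmX, hmY,
          lt_of_le_of_ne (variance_nonneg _ _) (Ne.symm hvX'),
          lt_of_le_of_ne (variance_nonneg _ _) (Ne.symm hvY')⟩
      have hc := hg (gf s t) hadm
      rw [corr] at hc
      have hsq : Real.sqrt (variance ((gf s t) ∘ X) μ * variance ((gf s t) ∘ Y) μ) ≠ 0 := by
        refine ne_of_gt (Real.sqrt_pos.mpr (mul_pos ?_ ?_))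
        · exact lt_of_le_of_ne (variance_nonneg _ _) (Ne.symm hvX')
        · exact lt_of_le_of_ne (variance_nonneg _ _) (Ne.symm hvY')
      have hcz : cov μ ((gf s t) ∘ X) ((gf s t) ∘ Y) = 0 := by
        rcases div_eq_zero_iff.mp hc with h | h
        · exact h
        · exact absurd h hsq
      rw [hcompX, hcompY, aux_cov_indOne_add μ (hA s) (hA t) (hB s) (hB t)] at hcz
      linarith [hcz]
    -- the diagonal identity
    have hdiag : ∀ s : ℝ, (μ ({ω | X ω ≤ s} ∩ {ω | Y ω ≤ s})).toReal
        = (μ {ω | X ω ≤ s}).toReal * (μ {ω | Y ω ≤ s}).toReal := by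
      intro s
      by_cases hFs : (μ {ω | X ω ≤ s}).toReal = 0 ∨ (μ {ω | X ω ≤ s}).toReal = 1
      · exact aux_inter_triv_left μ (hA s) hFs
      by_cases hGs : (μ {ω | Y ω ≤ s}).toReal = 0 ∨ (μ {ω | Y ω ≤ s}).toReal = 1
      · exact aux_inter_triv_right μ (hB s) hGs
      push_neg at hFs hGs
      have hFs0 : 0 < (μ {ω | X ω ≤ s}).toReal :=
        lt_of_le_of_ne ENNReal.toReal_nonneg (Ne.symm hFs.1)
      have hFs1 : (μ {ω | X ω ≤ s}).toReal < 1 := by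
        refine lt_of_le_of_ne ?_ hFs.2
        have := prob_le_one (μ := μ) (s := {ω | X ω ≤ s})
        simpa using ENNReal.toReal_mono (by simp) this
      have hGs0 : 0 < (μ {ω | Y ω ≤ s}).toReal :=
        lt_of_le_of_ne ENNReal.toReal_nonneg (Ne.symm hGs.1)
      have hGs1 : (μ {ω | Y ω ≤ s}).toReal < 1 := by
        refine lt_of_le_of_ne ?_ hGs.2
        have := prob_le_one (μ := μ) (s := {ω | Y ω ≤ s})
        simpa using ENNReal.toReal_mono (by simp) this
      have hvarX' : variance ((gf s s) ∘ X) μ ≠ 0 := by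
        rw [hcompX, aux_variance_indOne_add μ (hA s) (hA s), Set.inter_self]
        nlinarith
      have hvarY' : variance ((gf s s) ∘ Y) μ ≠ 0 := by
        rw [hcompY, aux_variance_indOne_add μ (hB s) (hB s), Set.inter_self]
        nlinarith
      have := hcov0 s s hvarX' hvarY'
      nlinarith [this]
    -- main case analysis
    by_cases hvarX : variance ((gf x y) ∘ X) μ = 0
    · -- degenerate X marginals at x and y
      rw [hcompX, aux_variance_indOne_add μ (hA x) (hA y)] at hvarX
      set a := (μ {ω | X ω ≤ x}).toReal with ha_def
      set b := (μ {ω | X ω ≤ y}).toReal with hb_def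
      set m := (μ ({ω | X ω ≤ x} ∩ {ω | X ω ≤ y})).toReal with hm_def
      have ha0 : 0 ≤ a := ENNReal.toReal_nonneg
      have hb0 : 0 ≤ b := ENNReal.toReal_nonneg
      have ha1 : a ≤ 1 := by
        have := prob_le_one (μ := μ) (s := {ω | X ω ≤ x})
        simpa [ha_def] using ENNReal.toReal_mono (by simp) this
      have hb1 : b ≤ 1 := by
        have := prob_le_one (μ := μ) (s := {ω | X ω ≤ y})
        simpa [hb_def] using ENNReal.toReal_mono (by simp) this
      have hmval : (m = a ∧ a ≤ b) ∨ (m = b ∧ b ≤ a) := by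
        rcases le_total x y with hxy | hxy
        · left
          have hsub : {ω | X ω ≤ x} ⊆ {ω | X ω ≤ y} := fun ω hω => le_trans hω hxy
          constructor
          · rw [hm_def, Set.inter_eq_self_of_subset_left hsub]
          · exact ENNReal.toReal_mono (measure_ne_top _ _) (measure_mono hsub)
        · right
          have hsub : {ω | X ω ≤ y} ⊆ {ω | X ω ≤ x} := fun ω hω => le_trans hω hxy
          constructor
          · rw [hm_def, Set.inter_eq_self_of_subset_right hsub]
          · exact ENNReal.toReal_mono (measure_ne_top _ _) (measure_mono hsub)
      have hab : (a = 0 ∨ a = 1) ∧ (b = 0 ∨ b = 1) := by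
        rcases hmval with ⟨hm, hle⟩ | ⟨hm, hle⟩
        · rw [hm] at hvarX
          have h1 : a * (1 - a) = 0 := by nlinarith
          have h2 : b * (1 - b) = 0 := by nlinarith
          constructor
          · rcases mul_eq_zero.mp h1 with h | h
            · exact Or.inl h
            · exact Or.inr (by linarith)
          · rcases mul_eq_zero.mp h2 with h | h
            · exact Or.inl h
            · exact Or.inr (by linarith)
        · rw [hm] at hvarX
          have h1 : a * (1 - a) = 0 := by nlinarith
          have h2 : b * (1 - b) = 0 := by nlinarith
          constructor
          · rcases mul_eq_zero.mp h1 with h | h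
            · exact Or.inl h
            · exact Or.inr (by linarith)
          · rcases mul_eq_zero.mp h2 with h | h
            · exact Or.inl h
            · exact Or.inr (by linarith)
      rw [hsetXY x y, hsetXY y x, aux_inter_triv_left μ (hA x) hab.1,
        aux_inter_triv_left μ (hA y) hab.2]
    by_cases hvarY : variance ((gf x y) ∘ Y) μ = 0
    · rw [hcompY, aux_variance_indOne_add μ (hB x) (hB y)] at hvarY
      set a := (μ {ω | Y ω ≤ x}).toReal with ha_def
      set b := (μ {ω | Y ω ≤ y}).toReal with hb_def
      set m := (μ ({ω | Y ω ≤ x} ∩ {ω | Y ω ≤ y})).toReal with hm_def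
      have ha0 : 0 ≤ a := ENNReal.toReal_nonneg
      have hb0 : 0 ≤ b := ENNReal.toReal_nonneg
      have ha1 : a ≤ 1 := by
        have := prob_le_one (μ := μ) (s := {ω | Y ω ≤ x})
        simpa [ha_def] using ENNReal.toReal_mono (by simp) this
      have hb1 : b ≤ 1 := by
        have := prob_le_one (μ := μ) (s := {ω | Y ω ≤ y})
        simpa [hb_def] using ENNReal.toReal_mono (by simp) this
      have hmval : (m = a ∧ a ≤ b) ∨ (m = b ∧ b ≤ a) := by
        rcases le_total x y with hxy | hxy
        · left
          have hsub : {ω | Y ω ≤ x} ⊆ {ω | Y ω ≤ y} := fun ω hω => le_trans hω hxy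
          constructor
          · rw [hm_def, Set.inter_eq_self_of_subset_left hsub]
          · exact ENNReal.toReal_mono (measure_ne_top _ _) (measure_mono hsub)
        · right
          have hsub : {ω | Y ω ≤ y} ⊆ {ω | Y ω ≤ x} := fun ω hω => le_trans hω hxy
          constructor
          · rw [hm_def, Set.inter_eq_self_of_subset_right hsub]
          · exact ENNReal.toReal_mono (measure_ne_top _ _) (measure_mono hsub)
      have hab : (a = 0 ∨ a = 1) ∧ (b = 0 ∨ b = 1) := by
        rcases hmval with ⟨hm, hle⟩ | ⟨hm, hle⟩
        · rw [hm] at hvarY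
          have h1 : a * (1 - a) = 0 := by nlinarith
          have h2 : b * (1 - b) = 0 := by nlinarith
          constructor
          · rcases mul_eq_zero.mp h1 with h | h
            · exact Or.inl h
            · exact Or.inr (by linarith)
          · rcases mul_eq_zero.mp h2 with h | h
            · exact Or.inl h
            · exact Or.inr (by linarith)
        · rw [hm] at hvarY
          have h1 : a * (1 - a) = 0 := by nlinarith
          have h2 : b * (1 - b) = 0 := by nlinarith
          constructor
          · rcases mul_eq_zero.mp h1 with h | h
            · exact Or.inl h
            · exact Or.inr (by linarith)
          · rcases mul_eq_zero.mp h2 with h | h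
            · exact Or.inl h
            · exact Or.inr (by linarith)
      rw [hsetXY x y, hsetXY y x, aux_inter_triv_right μ (hB y) hab.2,
        aux_inter_triv_right μ (hB x) hab.1]
    · have hmain := hcov0 x y hvarX hvarY
      have hdx := hdiag x
      have hdy := hdiag y
      rw [hsetXY x y, hsetXY y x]
      nlinarith [hmain, hdx, hdy]
  · -- backward direction
    intro hQI
    have hmeq := aux_quasiIndep_map_eq μ hXm hYm hQI
    constructor
    · -- corr X Y = 0
      have hXid : MemLp (id ∘ X) 2 μ := hX2
      have hYid : MemLp (id ∘ Y) 2 μ := hY2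
      have h := aux_mul_integral_eq μ hXm hYm hmeq id measurable_id hXid hYid
      simp only [id] at h
      have hcz : cov μ X Y = 0 := by
        rw [aux_cov_eq_sub μ hX2 hY2, h, sub_self]
      rw [corr, hcz, zero_div]
    · rintro g ⟨hgm, hg1, hg2, -, -⟩
      have h := aux_mul_integral_eq μ hXm hYm hmeq g hgm hg1 hg2
      have hcz : cov μ (g ∘ X) (g ∘ Y) = 0 := by
        rw [aux_cov_eq_sub μ hg1 hg2]
        simp only [Function.comp_apply]
        rw [h, sub_self]
      rw [corr, hcz, zero_div]
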